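/- Theorem 4 (monotone bounding of the adaptive value): for the strictly adaptive log-Gaussian exploration dynamic program, with lower approximate values U̲ᵛ_i defined by replacing each expectation with the ν-cell generalized Jensen bound, and upper approximate values U̅ᵛ_i by the ν-cell Edmundson–Madansky bound, the bounds are monotone and enclose the true optimum: if the (ν+1)-partition refines the ν-partition by splitting one interval, then U̲ᵛ_i(d_i) ≤ U̲^{ν+1}_i(d_i) ≤ U_i(d_i) ≤ U̅^{ν+1}_i(d_i) ≤ U̅ᵛ_i(d_i) for all i = 0,…,t. -/

import Mathlib

open Matrix

private lemma snoc_affine {n : ℕ} (z : Fin n → ℝ) (x y a b : ℝ) (hab : a + b = 1) :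
    a • (Fin.snoc z x : Fin (n + 1) → ℝ) + b • (Fin.snoc z y : Fin (n + 1) → ℝ) = (Fin.snoc z (a * x + b * y) : Fin (n + 1) → ℝ) := by
  funext j
  refine Fin.lastCases ?_ ?_ j
  · simp [Fin.snoc_last]
  · intro j
    simp only [Pi.add_apply, Pi.smul_apply, Fin.snoc_castSucc, smul_eq_mul]
    linear_combination z j * hab

private lemma convexOn_comp_snoc {n : ℕ} (F : (Fin (n + 1) → ℝ) → ℝ)
    (hF : ConvexOn ℝ Set.univ F) (z : Fin n → ℝ) :
    ConvexOn ℝ Set.univ (fun x : ℝ => F (Fin.snoc z x)) := by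
  refine ⟨convex_univ, fun x _ y _ a b ha hb hab => ?_⟩
  have := hF.2 (Set.mem_univ (Fin.snoc z x)) (Set.mem_univ (Fin.snoc z y)) ha hb hab
  rwa [snoc_affine z x y a b hab] at this

/-- Theorem 4 (monotone bounding of the strictly adaptive value).  Strictly adaptive
log-Gaussian exploration dynamic program over stages `i = 0,…,t`, with stagewise
rewards `Hent i a z` (`z : Fin (k+i) → ℝ` the observed measurement values) and one new
measurement appended per stage.  `Eop i a z` is the true conditional expectation
operator of a function of the new measurement `Z_{x_{i+1}}` given data values `z`;
`Jl ν` (resp. `Ju ν`) is its ν-cell generalized Jensen lower (resp. Edmundson–Madansky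
upper) approximation, each `(ν+1)`-partition refining the ν-partition by splitting one
interval, so that on convex integrands
`Jl ν ≤ Jl (ν+1) ≤ Eop ≤ Ju (ν+1) ≤ Ju ν`, and all three operators are monotone
(nonnegative weighted sums preserve pointwise inequalities).  `U` is the exact value
function and `Ul ν`, `Uu ν` the lower/upper approximate value functions; all value
functions are convex in the measurement vector (Lemma 3).  Then the bounds are
monotone and enclose the true optimum:
`Ul ν i ≤ Ul (ν+1) i ≤ U i ≤ Uu (ν+1) i ≤ Uu ν i` for all `i = 0,…,t`. -/
theorem monotone_bounding_of_adaptive_value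
    {α : Type*} (t k : ℕ)
    (A : ℕ → Finset α) (hA : ∀ i, (A i).Nonempty)
    (Hent : (i : ℕ) → α → (Fin (k + i) → ℝ) → ℝ)
    (Eop : (i : ℕ) → α → (Fin (k + i) → ℝ) → (ℝ → ℝ) → ℝ)
    (Jl Ju : ℕ → (i : ℕ) → α → (Fin (k + i) → ℝ) → (ℝ → ℝ) → ℝ)
    (U : (i : ℕ) → (Fin (k + i) → ℝ) → ℝ)
    (Ul Uu : ℕ → (i : ℕ) → (Fin (k + i) → ℝ) → ℝ)
    -- exact dynamic program:
    (hUt : ∀ z, U t z = (A t).sup' (hA t) fun a => Hent t a z)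
    (hU : ∀ i < t, ∀ z, U i z = (A i).sup' (hA i) fun a =>
      Hent i a z + Eop i a z fun x => U (i + 1) (Fin.snoc z x))
    -- lower (generalized Jensen) approximate dynamic program:
    (hUlt : ∀ ν z, Ul ν t z = (A t).sup' (hA t) fun a => Hent t a z)
    (hUl : ∀ ν, ∀ i < t, ∀ z, Ul ν i z = (A i).sup' (hA i) fun a =>
      Hent i a z + Jl ν i a z fun x => Ul ν (i + 1) (Fin.snoc z x))
    -- upper (Edmundson–Madansky) approximate dynamic program:
    (hUut : ∀ ν z, Uu ν t z = (A t).sup' (hA t) fun a => Hent t a z)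
    (hUu : ∀ ν, ∀ i < t, ∀ z, Uu ν i z = (A i).sup' (hA i) fun a =>
      Hent i a z + Ju ν i a z fun x => Uu ν (i + 1) (Fin.snoc z x))
    -- generalized Jensen / EM bounds with refinement monotonicity, on convex integrands:
    (hBounds : ∀ ν i a z (g : ℝ → ℝ), ConvexOn ℝ Set.univ g →
      Jl ν i a z g ≤ Jl (ν + 1) i a z g ∧
      Jl (ν + 1) i a z g ≤ Eop i a z g ∧
      Eop i a z g ≤ Ju (ν + 1) i a z g ∧
      Ju (ν + 1) i a z g ≤ Ju ν i a z g)
    -- the operators preserve pointwise inequalities: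
    (hMonoJl : ∀ ν i a z (g h : ℝ → ℝ), (∀ x, g x ≤ h x) → Jl ν i a z g ≤ Jl ν i a z h)
    (hMonoE : ∀ i a z (g h : ℝ → ℝ), (∀ x, g x ≤ h x) → Eop i a z g ≤ Eop i a z h)
    (hMonoJu : ∀ ν i a z (g h : ℝ → ℝ), (∀ x, g x ≤ h x) → Ju ν i a z g ≤ Ju ν i a z h)
    -- convexity of all value functions in the measurement vector (Lemma 3):
    (hconvU : ∀ i ≤ t, ConvexOn ℝ Set.univ (U i))
    (hconvUl : ∀ ν, ∀ i ≤ t, ConvexOn ℝ Set.univ (Ul ν i))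
    (hconvUu : ∀ ν, ∀ i ≤ t, ConvexOn ℝ Set.univ (Uu ν i)) :
    ∀ ν, ∀ i ≤ t, ∀ z,
      Ul ν i z ≤ Ul (ν + 1) i z ∧ Ul (ν + 1) i z ≤ U i z ∧
      U i z ≤ Uu (ν + 1) i z ∧ Uu (ν + 1) i z ≤ Uu ν i z := by
  intro ν
  suffices h : ∀ d i, i + d = t → ∀ z,
      Ul ν i z ≤ Ul (ν + 1) i z ∧ Ul (ν + 1) i z ≤ U i z ∧
      U i z ≤ Uu (ν + 1) i z ∧ Uu (ν + 1) i z ≤ Uu ν i z by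
    intro i hi z
    exact h (t - i) i (by omega) z
  intro d
  induction d with
  | zero =>
    intro i hi z
    have hit : i = t := by omega
    subst hit
    refine ⟨?_, ?_, ?_, ?_⟩ <;> simp [hUlt, hUt, hUut]
  | succ d ih =>
    intro i hi z
    have hit : i < t := by omega
    have ih' := ih (i + 1) (by omega)
    have hle : i + 1 ≤ t := by omega
    -- convexity of composed integrands
    have cUl1 := convexOn_comp_snoc _ (hconvUl (ν + 1) (i + 1) hle) z
    have cU := convexOn_comp_snoc _ (hconvU (i + 1) hle) z
    have cUu1 := convexOn_comp_snoc _ (hconvUu (ν + 1) (i + 1) hle) z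
    rw [hUl ν i hit z, hUl (ν + 1) i hit z, hU i hit z, hUu (ν + 1) i hit z, hUu ν i hit z]
    refine ⟨?_, ?_, ?_, ?_⟩ <;>
      refine Finset.sup'_mono_fun (fun a _ => add_le_add le_rfl ?_)
    · calc Jl ν i a z (fun x => Ul ν (i + 1) (Fin.snoc z x))
          ≤ Jl ν i a z (fun x => Ul (ν + 1) (i + 1) (Fin.snoc z x)) :=
            hMonoJl _ _ _ _ _ _ (fun x => (ih' (Fin.snoc z x)).1)
        _ ≤ Jl (ν + 1) i a z (fun x => Ul (ν + 1) (i + 1) (Fin.snoc z x)) :=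
            (hBounds ν i a z _ cUl1).1
    · calc Jl (ν + 1) i a z (fun x => Ul (ν + 1) (i + 1) (Fin.snoc z x))
          ≤ Eop i a z (fun x => Ul (ν + 1) (i + 1) (Fin.snoc z x)) :=
            (hBounds ν i a z _ cUl1).2.1
        _ ≤ Eop i a z (fun x => U (i + 1) (Fin.snoc z x)) :=
            hMonoE _ _ _ _ _ (fun x => (ih' (Fin.snoc z x)).2.1)
    · calc Eop i a z (fun x => U (i + 1) (Fin.snoc z x))
          ≤ Ju (ν + 1) i a z (fun x => U (i + 1) (Fin.snoc z x)) :=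
            (hBounds ν i a z _ cU).2.2.1
        _ ≤ Ju (ν + 1) i a z (fun x => Uu (ν + 1) (i + 1) (Fin.snoc z x)) :=
            hMonoJu _ _ _ _ _ _ (fun x => (ih' (Fin.snoc z x)).2.2.1)
    · calc Ju (ν + 1) i a z (fun x => Uu (ν + 1) (i + 1) (Fin.snoc z x))
          ≤ Ju ν i a z (fun x => Uu (ν + 1) (i + 1) (Fin.snoc z x)) :=
            (hBounds ν i a z _ cUu1).2.2.2
        _ ≤ Ju ν i a z (fun x => Uu ν (i + 1) (Fin.snoc z x)) :=
            hMonoJu _ _ _ _ _ _ (fun x => (ih' (Fin.snoc z x)).2.2.2)
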